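/- Let Γ be a distance-regular graph with valency k such that for some vertex x the complement of the local graph Δ(x) is the line graph of a bipartite semiregular graph Σ with degrees s and t satisfying 2 ≤ s < t. Then c₂ ≥ k − 2s − t + 3. -/

import Mathlib

open SimpleGraph Finset

/-- A distance-regular graph with diameter `D` and intersection numbers `b i`, `c i`. -/
structure SimpleGraph.IsDRG {V : Type*} [Fintype V] [DecidableEq V]
    (G : SimpleGraph V) [DecidableRel G.Adj] (D : ℕ) (b c : ℕ → ℕ) : Prop where
  connected : G.Connected
  dist_le : ∀ x y : V, G.dist x y ≤ D
  exists_dist : ∃ x y : V, G.dist x y = D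
  b_eq : ∀ i ≤ D, ∀ x y : V, G.dist x y = i →
    ((G.neighborFinset y).filter (fun z => G.dist x z = i + 1)).card = b i
  c_eq : ∀ i ≤ D, ∀ x y : V, G.dist x y = i →
    ((G.neighborFinset y).filter (fun z => G.dist x z + 1 = i)).card = c i
  b_last : b D = 0
  c_zero : c 0 = 0

/-- The second largest eigenvalue of the real symmetric matrix `A` is at most `t`:
all eigenvalues except (possibly) one are at most `t`. -/
def Matrix.SecondEigLE {n : Type*} [Fintype n] [DecidableEq n]
    (A : Matrix n n ℝ) (t : ℝ) : Prop :=
  ∀ hA : A.IsHermitian, ∃ i, ∀ j, j ≠ i → hA.eigenvalues j ≤ t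

instance {V : Type*} (G : SimpleGraph V) [DecidableRel G.Adj] (s : Set V) :
    DecidableRel (G.induce s).Adj := fun a b => inferInstanceAs (Decidable (G.Adj a b))

/-- The local graph of `G` at `x`: the subgraph induced on the neighbours of `x`. -/
abbrev SimpleGraph.localGraph {V : Type*} [Fintype V] [DecidableEq V]
    (G : SimpleGraph V) [DecidableRel G.Adj] (x : V) : SimpleGraph (G.neighborSet x) :=
  G.induce (G.neighborSet x)

theorem c2_lower_bound_of_compl_local_lineGraph_semiregular
    {V W : Type*} [Fintype V] [DecidableEq V] [Fintype W] [DecidableEq W]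
    (G : SimpleGraph V) [DecidableRel G.Adj] (D : ℕ) (b c : ℕ → ℕ) (hD : 2 ≤ D)
    (hG : G.IsDRG D b c) (x : V)
    (S : SimpleGraph W) [DecidableRel S.Adj] (s t : ℕ) (hs : 2 ≤ s) (hst : s < t)
    (hconn : S.Connected)
    (P : Finset W) (hbip : ∀ ⦃a b'⦄, S.Adj a b' → (a ∈ P ↔ b' ∉ P))
    (hdegP : ∀ a ∈ P, S.degree a = s) (hdegQ : ∀ a ∉ P, S.degree a = t)
    (hiso : Nonempty ((G.localGraph x)ᶜ ≃g S.lineGraph)) :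
    (b 0 : ℤ) - 2 * s - t + 3 ≤ (c 2 : ℤ) := by
  classical
  obtain ⟨e⟩ := hiso
  -- b 0 = degree of x
  have hb0 : b 0 = G.degree x := by
    have h := hG.b_eq 0 (by omega) x x (by simp)
    rw [← h, Finset.filter_true_of_mem]
    · rfl
    · intro z hz
      rw [(SimpleGraph.dist_eq_one_iff_adj (G := G))]
      exact (G.mem_neighborFinset x z).mp hz
  -- number of edges of S equals degree of x
  have hK : Fintype.card S.edgeSet = G.degree x := by
    rw [← G.card_neighborSet_eq_degree]
    exact (Fintype.card_congr e.toEquiv).symm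
  -- x has a neighbor
  have hxadj : ∃ y, G.Adj x y := by
    obtain ⟨x0, y0, hxy⟩ := hG.exists_dist
    have hne : x0 ≠ y0 := by
      intro h; rw [h, SimpleGraph.dist_self] at hxy; omega
    have hne' : x ≠ x0 ∨ x ≠ y0 := by
      by_contra h; push_neg at h; exact hne (h.1 ▸ h.2)
    have : ∃ y1, x ≠ y1 := by rcases hne' with h | h; exacts [⟨x0, h⟩, ⟨y0, h⟩]
    obtain ⟨y1, hy1⟩ := this
    obtain ⟨p⟩ := hG.connected x y1
    cases p with
    | nil => exact absurd rfl hy1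
    | cons h _ => exact ⟨_, h⟩
  obtain ⟨y0, hy0⟩ := hxadj
  -- hence S has an edge
  have hSe : S.edgeSet.Nonempty := ⟨(e ⟨y0, hy0⟩ : S.edgeSet).1, (e ⟨y0, hy0⟩).2⟩
  -- find a vertex u ∉ P
  obtain ⟨ed, hed⟩ := hSe
  induction ed using Sym2.ind with
  | _ a a' =>
  rw [SimpleGraph.mem_edgeSet] at hed
  have hu : ∃ u, u ∉ P := by
    by_cases ha : a ∈ P
    · exact ⟨a', ((hbip hed).mp ha)⟩
    · exact ⟨a, ha⟩
  obtain ⟨u, hu⟩ := hu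
  have hdegu : S.degree u = t := hdegQ u hu
  -- two distinct neighbors of u
  have h2card : 1 < (S.neighborFinset u).card := by
    rw [S.card_neighborFinset_eq_degree, hdegu]; omega
  rw [Finset.one_lt_card_iff] at h2card
  obtain ⟨v1, v2, hv1, hv2, hv12⟩ := h2card
  rw [S.mem_neighborFinset] at hv1 hv2
  -- corresponding edges
  set e1 : S.edgeSet := ⟨s(u, v1), S.mem_edgeSet.mpr hv1⟩ with he1
  set e2 : S.edgeSet := ⟨s(u, v2), S.mem_edgeSet.mpr hv2⟩ with he2
  have he12 : e1 ≠ e2 := by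
    intro h
    exact hv12 (Sym2.congr_right.mp (congrArg Subtype.val h))
  -- v1, v2 are in P, degree s
  have hv1P : v1 ∈ P := by have := hbip hv1; tauto
  have hv2P : v2 ∈ P := by have := hbip hv2; tauto
  have hdeg1 : S.degree v1 = s := hdegP v1 hv1P
  have hdeg2 : S.degree v2 = s := hdegP v2 hv2P
  -- e1, e2 adjacent in line graph
  have hline : S.lineGraph.Adj e1 e2 :=
    SimpleGraph.lineGraph_adj_iff_exists.mpr ⟨he12, u, by simp [he1], by simp [he2]⟩
  -- preimages are non-adjacent neighbors of x
  set y : G.neighborSet x := e.symm e1 with hy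
  set z : G.neighborSet x := e.symm e2 with hz
  have hcompl : ((G.localGraph x)ᶜ).Adj y z := e.symm.map_adj_iff.mpr hline
  rw [SimpleGraph.compl_adj] at hcompl
  obtain ⟨hyz_ne, hyz_nadj⟩ := hcompl
  have hyz_nadjG : ¬ G.Adj ↑y ↑z := hyz_nadj
  have hyz_neV : (y : V) ≠ (z : V) := fun h => hyz_ne (Subtype.coe_injective h)
  -- distance 2
  have hdist : G.dist ↑y ↑z = 2 := by
    have hle : G.dist (y : V) (z : V) ≤ 2 := by
      exact le_trans (SimpleGraph.dist_le
        (SimpleGraph.Walk.cons (G.adj_symm y.2) (SimpleGraph.Walk.cons z.2 SimpleGraph.Walk.nil))) (le_of_eq rfl)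
    have hpos : 0 < G.dist (y : V) (z : V) := hG.connected.pos_dist_of_ne hyz_neV
    have hne1 : G.dist (y : V) (z : V) ≠ 1 := fun h =>
      hyz_nadjG ((SimpleGraph.dist_eq_one_iff_adj (G := G)).mp h)
    omega
  have hc2 := hG.c_eq 2 hD (↑y) (↑z) hdist
  set A := (G.neighborFinset ↑z).filter (fun w => G.dist ↑y w + 1 = 2) with hA
  -- good edges
  set good : Finset S.edgeSet :=
    Finset.univ.filter
      (fun f => u ∉ (f : Sym2 W) ∧ v1 ∉ (f : Sym2 W) ∧ v2 ∉ (f : Sym2 W)) with hgood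
  -- for a good edge f, its preimage is adjacent to both y and z
  have hgood_adj : ∀ f ∈ good, G.Adj ↑y ↑(e.symm f) ∧ G.Adj ↑z ↑(e.symm f) := by
    intro f hf
    rw [hgood, Finset.mem_filter] at hf
    obtain ⟨-, hfu, hfv1, hfv2⟩ := hf
    have key : ∀ (g : S.edgeSet) (v' : W), (g : Sym2 W) = s(u, v') →
        (v' = v1 ∨ v' = v2) → G.Adj ↑(e.symm g) ↑(e.symm f) := by
      intro g v' hgv hv'
      have hfg : f ≠ g := by
        intro h
        apply hfu
        rw [h, hgv]; simp
      have hnl : ¬ S.lineGraph.Adj g f := by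
        rw [SimpleGraph.lineGraph_adj_iff_exists]
        rintro ⟨-, m, hm1, hm2⟩
        rw [hgv, Sym2.mem_iff] at hm1
        rcases hm1 with rfl | rfl
        · exact hfu hm2
        · rcases hv' with rfl | rfl
          · exact hfv1 hm2
          · exact hfv2 hm2
      have hnc : ¬ ((G.localGraph x)ᶜ).Adj (e.symm g) (e.symm f) :=
        fun h => hnl (e.symm.map_adj_iff.mp h)
      rw [SimpleGraph.compl_adj] at hnc
      push_neg at hnc
      have hne : e.symm g ≠ e.symm f := fun h => hfg (e.symm.injective h).symm
      exact hnc hne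
    refine ⟨?_, ?_⟩
    · exact key e1 v1 rfl (Or.inl rfl)
    · exact key e2 v2 rfl (Or.inr rfl)
  -- the image of good, together with x, sits inside A
  have himage : insert x (good.image (fun f => (↑(e.symm f) : V))) ⊆ A := by
    intro w hw
    rw [Finset.mem_insert] at hw
    rw [hA, Finset.mem_filter, G.mem_neighborFinset]
    rcases hw with rfl | hw
    · refine ⟨G.adj_symm z.2, ?_⟩
      rw [(SimpleGraph.dist_comm (G := G)), (SimpleGraph.dist_eq_one_iff_adj (G := G)).mpr y.2]
    · obtain ⟨f, hf, rfl⟩ := Finset.mem_image.mp hw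
      obtain ⟨h1, h2⟩ := hgood_adj f hf
      exact ⟨h2, by rw [(SimpleGraph.dist_eq_one_iff_adj (G := G)).mpr h1]⟩
  have hxnot : x ∉ good.image (fun f => (↑(e.symm f) : V)) := by
    intro hx
    obtain ⟨f, -, hf⟩ := Finset.mem_image.mp hx
    exact G.irrefl (hf ▸ (e.symm f).2)
  have hcard1 : good.card + 1 ≤ A.card := by
    have := Finset.card_le_card himage
    rwa [Finset.card_insert_of_notMem hxnot,
      Finset.card_image_of_injective _
        (fun f g h => e.symm.injective (Subtype.coe_injective h))] at this
  -- bad edges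
  set bad : Finset S.edgeSet :=
    Finset.univ.filter
      (fun f => ¬(u ∉ (f : Sym2 W) ∧ v1 ∉ (f : Sym2 W) ∧ v2 ∉ (f : Sym2 W))) with hbad
  have hsplit : good.card + bad.card = Fintype.card S.edgeSet := by
    rw [hgood, hbad]
    exact Finset.card_filter_add_card_filter_not _
  -- bound bad
  set U : Finset (Sym2 W) :=
    S.incidenceFinset u ∪ ((S.incidenceFinset v1).erase s(u, v1))
      ∪ ((S.incidenceFinset v2).erase s(u, v2)) with hU
  have hbadU : bad.card ≤ U.card := by
    refine Finset.card_le_card_of_injOn (fun f => (f : Sym2 W)) ?_ ?_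
    · intro f hf
      rw [hbad, Finset.mem_coe, Finset.mem_filter] at hf
      obtain ⟨-, hf⟩ := hf
      show (↑f : Sym2 W) ∈ U
      rw [hU]
      by_cases hfu : u ∈ (f : Sym2 W)
      · refine Finset.mem_union_left _ (Finset.mem_union_left _ ?_)
        rw [SimpleGraph.mem_incidenceFinset]
        exact ⟨f.2, hfu⟩
      by_cases hfv : v1 ∈ (f : Sym2 W)
      · refine Finset.mem_union_left _ (Finset.mem_union_right _
          (Finset.mem_erase.mpr ⟨fun h => hfu (by rw [h]; simp), ?_⟩))
        rw [SimpleGraph.mem_incidenceFinset]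
        exact ⟨f.2, hfv⟩
      · have hfv2 : v2 ∈ (f : Sym2 W) := by tauto
        refine Finset.mem_union_right _
          (Finset.mem_erase.mpr ⟨fun h => hfu (by rw [h]; simp), ?_⟩)
        rw [SimpleGraph.mem_incidenceFinset]
        exact ⟨f.2, hfv2⟩
    · exact fun f _ g _ h => Subtype.coe_injective h
  have hUcard : U.card ≤ t + (s - 1) + (s - 1) := by
    rw [hU]
    refine le_trans (Finset.card_union_le _ _) ?_
    refine add_le_add (le_trans (Finset.card_union_le _ _) (add_le_add ?_ ?_)) ?_
    · rw [S.card_incidenceFinset_eq_degree, hdegu]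
    · rw [Finset.card_erase_of_mem, S.card_incidenceFinset_eq_degree, hdeg1]
      rw [SimpleGraph.mem_incidenceFinset]
      exact ⟨S.mem_edgeSet.mpr hv1, by simp⟩
    · rw [Finset.card_erase_of_mem, S.card_incidenceFinset_eq_degree, hdeg2]
      rw [SimpleGraph.mem_incidenceFinset]
      exact ⟨S.mem_edgeSet.mpr hv2, by simp⟩
  -- put it together
  have hAc : A.card = c 2 := hc2
  have hdegx : G.degree x = b 0 := hb0.symm
  omega
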